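/- Let β > 0, t > 0, and x ∈ ℝ with x ≠ 0. Then ∫_t^∞ (r−t)^{−3/2} · exp( −r x²/(2t(r−t)) − β r ) dr = (√(2β)/|x|) · ∫_t^∞ (r−t)^{−1/2} · exp( −r x²/(2t(r−t)) − β r ) dr, both integrals being finite. Equivalently, for the prior μ(dr) = (√β/Γ(1/2)) r^{−1/2} e^{−βr} dr on (0,∞) (the Γ(1/2,β) distribution), the conditional pinning rate f(t,x) := (∫_t^∞ (r−t)^{−1} √(r/(r−t)) e^{−r x²/(2t(r−t))} μ(dr)) / (∫_t^∞ √(r/(r−t)) e^{−r x²/(2t(r−t))} μ(dr)) equals √(2β)/|x|, independently of t. -/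

import Mathlib

open MeasureTheory Set Real

lemma base_int {b : ℝ} (hb : 0 < b) :
    IntegrableOn (fun s : ℝ => s ^ (-(1:ℝ)/2) * Real.exp (-(b*s))) (Set.Ioi 0) := by
  have h0 := Real.GammaIntegral_convergent (by norm_num : (0:ℝ) < 1/2)
  have h1 : IntegrableOn (fun x : ℝ => Real.exp (-(b*x)) * (b*x) ^ ((1:ℝ)/2 - 1)) (Set.Ioi 0) := by
    have := (integrableOn_Ioi_comp_mul_left_iff
      (fun x : ℝ => Real.exp (-x) * x ^ ((1:ℝ)/2 - 1)) 0 hb).mpr (by simpa using h0)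
    simpa using this
  have h2 : IntegrableOn (fun x : ℝ => b ^ ((1:ℝ)/2) * (Real.exp (-(b*x)) * (b*x) ^ ((1:ℝ)/2 - 1))) (Set.Ioi 0) := h1.const_mul (b ^ ((1:ℝ)/2))
  apply h2.congr_fun ?_ measurableSet_Ioi
  intro x hx
  have hx0 : (0:ℝ) < x := hx
  show b ^ ((1:ℝ)/2) * (Real.exp (-(b*x)) * (b*x) ^ ((1:ℝ)/2 - 1)) = x ^ (-(1:ℝ)/2) * Real.exp (-(b*x))
  rw [Real.mul_rpow hb.le hx0.le]
  have hx2 : ((1:ℝ)/2 - 1) = -(1:ℝ)/2 := by norm_num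
  rw [hx2]
  have hb' : b ^ ((1:ℝ)/2) * b ^ (-(1:ℝ)/2) = 1 := by
    rw [← Real.rpow_add hb]; norm_num
  linear_combination (Real.exp (-(b*x)) * x ^ (-(1:ℝ)/2)) * hb'

lemma exp_weight_meas (a b c : ℝ) :
    AEStronglyMeasurable (fun s : ℝ => s ^ c * Real.exp (-a/s - b*s))
      (volume.restrict (Set.Ioi 0)) := by
  apply Measurable.aestronglyMeasurable
  fun_prop

lemma z_exp_le_one {z : ℝ} (hz : 0 ≤ z) : z * Real.exp (-z) ≤ 1 := by
  have h1 : z ≤ Real.exp z := by linarith [Real.add_one_le_exp z]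
  rw [Real.exp_neg]
  rw [mul_inv_le_iff₀ (Real.exp_pos z)]
  simpa using h1

lemma J1_int {a b : ℝ} (ha : 0 < a) (hb : 0 < b) :
    IntegrableOn (fun s : ℝ => s ^ (-(1:ℝ)/2) * Real.exp (-a/s - b*s)) (Set.Ioi 0) := by
  apply Integrable.mono' (base_int hb) (exp_weight_meas a b _)
  rw [ae_restrict_iff' measurableSet_Ioi]
  filter_upwards with s hs
  have hs0 : (0:ℝ) < s := hs
  have h1 : (0:ℝ) < s ^ (-(1:ℝ)/2) := Real.rpow_pos_of_pos hs0 _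
  rw [Real.norm_eq_abs, abs_of_nonneg (by positivity)]
  have : Real.exp (-a/s - b*s) ≤ Real.exp (-(b*s)) := by
    apply Real.exp_le_exp.mpr
    have h2 : 0 ≤ a / s := by positivity
    rw [neg_div]
    linarith
  exact mul_le_mul_of_nonneg_left this h1.le

lemma J3_int {a b : ℝ} (ha : 0 < a) (hb : 0 < b) :
    IntegrableOn (fun s : ℝ => s ^ (-(3:ℝ)/2) * Real.exp (-a/s - b*s)) (Set.Ioi 0) := by
  have hmaj : IntegrableOn (fun s : ℝ => a⁻¹ * (s ^ (-(1:ℝ)/2) * Real.exp (-(b*s)))) (Set.Ioi 0) :=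
    (base_int hb).const_mul _
  apply Integrable.mono' hmaj (exp_weight_meas a b _)
  rw [ae_restrict_iff' measurableSet_Ioi]
  filter_upwards with s hs
  have hs0 : (0:ℝ) < s := hs
  rw [Real.norm_eq_abs, abs_of_nonneg (by positivity)]
  have hsplit : s ^ (-(3:ℝ)/2) = s ^ (-(1:ℝ)/2) * s⁻¹ := by
    rw [← Real.rpow_neg_one s, ← Real.rpow_add hs0]; norm_num
  have hesplit : Real.exp (-a/s - b*s) = Real.exp (-(a/s)) * Real.exp (-(b*s)) := by
    rw [← Real.exp_add]; ring_nf
  rw [hsplit, hesplit]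
  have hkey : s⁻¹ * Real.exp (-(a/s)) ≤ a⁻¹ := by
    have h := z_exp_le_one (z := a/s) (by positivity)
    have heq : s⁻¹ * Real.exp (-(a/s)) = (a/s * Real.exp (-(a/s))) / a := by
      field_simp
    rw [heq, inv_eq_one_div]
    gcongr
  have h1 : (0:ℝ) < s ^ (-(1:ℝ)/2) := Real.rpow_pos_of_pos hs0 _
  calc s ^ (-(1:ℝ)/2) * s⁻¹ * (Real.exp (-(a/s)) * Real.exp (-(b*s)))
      = (s ^ (-(1:ℝ)/2) * Real.exp (-(b*s))) * (s⁻¹ * Real.exp (-(a/s))) := by ring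
    _ ≤ (s ^ (-(1:ℝ)/2) * Real.exp (-(b*s))) * a⁻¹ :=
        mul_le_mul_of_nonneg_left hkey (by positivity)
    _ = a⁻¹ * (s ^ (-(1:ℝ)/2) * Real.exp (-(b*s))) := by ring

lemma J_eq {a b : ℝ} (ha : 0 < a) (hb : 0 < b) :
    (∫ s in Set.Ioi (0:ℝ), s ^ (-(3:ℝ)/2) * Real.exp (-a/s - b*s)) =
      Real.sqrt (b/a) * ∫ s in Set.Ioi (0:ℝ), s ^ (-(1:ℝ)/2) * Real.exp (-a/s - b*s) := by
  have hc : (0:ℝ) < b/a := by positivity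
  -- Step 1: inversion s ↦ s⁻¹
  have h1 : (∫ s in Set.Ioi (0:ℝ), s ^ (-(3:ℝ)/2) * Real.exp (-a/s - b*s))
      = ∫ x in Set.Ioi (0:ℝ), x ^ (-(1:ℝ)/2) * Real.exp (-(a*x) - b/x) := by
    rw [← integral_comp_rpow_Ioi (fun s => s ^ (-(3:ℝ)/2) * Real.exp (-a/s - b*s))
      (p := -1) (by norm_num)]
    apply setIntegral_congr_fun measurableSet_Ioi
    intro x hx
    have hx0 : (0:ℝ) < x := hx
    show (|(-1:ℝ)| * x ^ ((-1:ℝ) - 1)) • ((x ^ (-1:ℝ)) ^ (-(3:ℝ)/2) *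
        Real.exp (-a/(x ^ (-1:ℝ)) - b * (x ^ (-1:ℝ)))) = _
    rw [smul_eq_mul, Real.rpow_neg_one x]
    have e1 : (x⁻¹ : ℝ) ^ (-(3:ℝ)/2) = x ^ ((3:ℝ)/2) := by
      rw [Real.inv_rpow hx0.le, ← Real.rpow_neg hx0.le]; norm_num
    have e2 : -a / x⁻¹ - b * x⁻¹ = -(a*x) - b/x := by field_simp
    have e3 : |(-1:ℝ)| * x ^ ((-1:ℝ) - 1) = x ^ (-(2:ℝ)) := by norm_num
    have e4 : x ^ (-(2:ℝ)) * x ^ ((3:ℝ)/2) = x ^ (-(1:ℝ)/2) := by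
      rw [← Real.rpow_add hx0]; norm_num
    rw [e1, e2, e3, ← mul_assoc, e4]
  -- Step 2: scaling x ↦ (b/a) x
  have hs := integral_comp_mul_left_Ioi
    (fun x => x ^ (-(1:ℝ)/2) * Real.exp (-(a*x) - b/x)) 0 hc
  rw [mul_zero, smul_eq_mul] at hs
  have hpt : ∀ x ∈ Set.Ioi (0:ℝ),
      (fun x => ((b/a)*x) ^ (-(1:ℝ)/2) * Real.exp (-(a*((b/a)*x)) - b/((b/a)*x))) x
      = (fun x => (b/a) ^ (-(1:ℝ)/2) * (x ^ (-(1:ℝ)/2) * Real.exp (-a/x - b*x))) x := by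
    intro x hx
    have hx0 : (0:ℝ) < x := hx
    simp only []
    rw [Real.mul_rpow hc.le hx0.le]
    have e5 : -(a*((b/a)*x)) - b/((b/a)*x) = -a/x - b*x := by
      field_simp
      ring
    rw [e5]; ring
  have h6 : (∫ x in Set.Ioi (0:ℝ), ((b/a)*x) ^ (-(1:ℝ)/2) *
        Real.exp (-(a*((b/a)*x)) - b/((b/a)*x)))
      = (b/a) ^ (-(1:ℝ)/2) * ∫ s in Set.Ioi (0:ℝ), s ^ (-(1:ℝ)/2) * Real.exp (-a/s - b*s) := by
    rw [setIntegral_congr_fun measurableSet_Ioi hpt, MeasureTheory.integral_const_mul]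
  rw [h1]
  have h7 : (∫ x in Set.Ioi (0:ℝ), x ^ (-(1:ℝ)/2) * Real.exp (-(a*x) - b/x))
      = (b/a) * ((b/a) ^ (-(1:ℝ)/2) *
          ∫ s in Set.Ioi (0:ℝ), s ^ (-(1:ℝ)/2) * Real.exp (-a/s - b*s)) := by
    beta_reduce at hs
    rw [← h6, hs]
    field_simp
  rw [h7, ← mul_assoc]
  congr 1
  rw [Real.sqrt_eq_rpow]
  nth_rewrite 1 [← Real.rpow_one (b/a)]
  rw [← Real.rpow_add hc]
  norm_num

lemma J1_pos {a b : ℝ} (ha : 0 < a) (hb : 0 < b) :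
    0 < ∫ s in Set.Ioi (0:ℝ), s ^ (-(1:ℝ)/2) * Real.exp (-a/s - b*s) := by
  refine (setIntegral_pos_iff_support_of_nonneg_ae ?_ (J1_int ha hb)).mpr ?_
  · refine (ae_restrict_iff' measurableSet_Ioi).mpr ?_
    filter_upwards with s hs
    have hs0 : (0:ℝ) < s := hs
    positivity
  · have hsub : Set.Ioi (0:ℝ) ⊆ Function.support
        (fun s : ℝ => s ^ (-(1:ℝ)/2) * Real.exp (-a/s - b*s)) := by
      intro s hs
      have hs0 : (0:ℝ) < s := hs
      have : (0:ℝ) < s ^ (-(1:ℝ)/2) * Real.exp (-a/s - b*s) := by positivity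
      exact this.ne'
    rw [Set.inter_eq_right.mpr hsub, Real.volume_Ioi]
    exact ENNReal.zero_lt_top

lemma shift_integral (f : ℝ → ℝ) (t : ℝ) : ∫ r in Set.Ioi t, f r = ∫ s in Set.Ioi 0, f (s + t) := by
  have hpre : (fun x : ℝ => x + t) ⁻¹' (Set.Ioi t) = Set.Ioi 0 := by
    ext y; simp [lt_add_iff_pos_left]
  rw [← (measurePreserving_add_right volume t).setIntegral_preimage_emb
    (MeasurableEquiv.addRight t).measurableEmbedding f (Set.Ioi t), hpre]

lemma shift_integrable (f : ℝ → ℝ) (t : ℝ) :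
    IntegrableOn (fun s => f (s + t)) (Set.Ioi 0) ↔ IntegrableOn f (Set.Ioi t) := by
  have hpre : (fun x : ℝ => x + t) ⁻¹' (Set.Ioi t) = Set.Ioi 0 := by
    ext y; simp [lt_add_iff_pos_left]
  rw [← hpre]
  exact (measurePreserving_add_right volume t).integrableOn_comp_preimage
    (MeasurableEquiv.addRight t).measurableEmbedding

/-- under the `Γ(1/2,β)` prior the conditional pinning rate is
`f(t,x) = √(2β)/|x|`, independently of `t`; equivalently the integral identity
relating the `(r−t)^{−3/2}` and `(r−t)^{−1/2}` weighted integrals holds, both being finite. -/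
theorem gamma_half_prior_pinning_rate (β t x : ℝ) (hβ : 0 < β) (ht : 0 < t) (hx : x ≠ 0) :
    IntegrableOn (fun r : ℝ => (r - t) ^ (-(3:ℝ)/2) *
        Real.exp (-(r * x ^ 2) / (2 * t * (r - t)) - β * r)) (Set.Ioi t) ∧
    IntegrableOn (fun r : ℝ => (r - t) ^ (-(1:ℝ)/2) *
        Real.exp (-(r * x ^ 2) / (2 * t * (r - t)) - β * r)) (Set.Ioi t) ∧
    (∫ r in Set.Ioi t, (r - t) ^ (-(3:ℝ)/2) *
        Real.exp (-(r * x ^ 2) / (2 * t * (r - t)) - β * r)) =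
      (Real.sqrt (2 * β) / |x|) *
        (∫ r in Set.Ioi t, (r - t) ^ (-(1:ℝ)/2) *
          Real.exp (-(r * x ^ 2) / (2 * t * (r - t)) - β * r)) ∧
    ((∫ r in Set.Ioi t, (r - t)⁻¹ * Real.sqrt (r / (r - t)) *
          Real.exp (-(r * x ^ 2) / (2 * t * (r - t))) *
          (Real.sqrt β / Real.Gamma (1/2) * r ^ (-(1:ℝ)/2) * Real.exp (-(β * r)))) /
      (∫ r in Set.Ioi t, Real.sqrt (r / (r - t)) *
          Real.exp (-(r * x ^ 2) / (2 * t * (r - t))) *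
          (Real.sqrt β / Real.Gamma (1/2) * r ^ (-(1:ℝ)/2) * Real.exp (-(β * r))))) =
      Real.sqrt (2 * β) / |x| := by
  have ha : (0:ℝ) < x^2/2 := by positivity
  set a : ℝ := x^2/2 with ha_def
  set K : ℝ := Real.exp (-(x^2/(2*t)) - β*t) with hK_def
  have hK : 0 < K := Real.exp_pos _
  -- shifted integrand identity
  have hshift : ∀ c : ℝ, Set.EqOn
      (fun s : ℝ => (fun r : ℝ => (r - t) ^ c *
          Real.exp (-(r * x ^ 2) / (2 * t * (r - t)) - β * r)) (s + t))
      (fun s : ℝ => K * (s ^ c * Real.exp (-a/s - β*s))) (Set.Ioi 0) := by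
    intro c s hs
    have hs0 : (0:ℝ) < s := hs
    simp only []
    have h1 : s + t - t = s := by ring
    rw [h1]
    have h2 : -((s + t) * x ^ 2) / (2 * t * s) - β * (s + t)
        = (-(x^2/(2*t)) - β*t) + (-a/s - β*s) := by
      field_simp
      ring
    rw [h2, Real.exp_add]
    ring
  -- integrability
  have hint : ∀ c : ℝ, IntegrableOn (fun s : ℝ => s ^ c * Real.exp (-a/s - β*s)) (Set.Ioi 0) →
      IntegrableOn (fun r : ℝ => (r - t) ^ c *
        Real.exp (-(r * x ^ 2) / (2 * t * (r - t)) - β * r)) (Set.Ioi t) := by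
    intro c hJ
    rw [← shift_integrable]
    have h' : IntegrableOn (fun s : ℝ => K * (s ^ c * Real.exp (-a/s - β*s))) (Set.Ioi 0) :=
      hJ.const_mul K
    exact h'.congr_fun (fun s hs => (hshift c hs).symm) measurableSet_Ioi
  have hint3 := hint _ (J3_int ha hβ)
  have hint1 := hint _ (J1_int ha hβ)
  -- integral values
  have hval : ∀ c : ℝ, (∫ r in Set.Ioi t, (r - t) ^ c *
        Real.exp (-(r * x ^ 2) / (2 * t * (r - t)) - β * r))
      = K * ∫ s in Set.Ioi 0, s ^ c * Real.exp (-a/s - β*s) := by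
    intro c
    rw [shift_integral, setIntegral_congr_fun measurableSet_Ioi (hshift c),
      MeasureTheory.integral_const_mul]
  have hsq : Real.sqrt (β/a) = Real.sqrt (2*β) / |x| := by
    rw [show β/a = (2*β)/x^2 by rw [ha_def]; field_simp,
      Real.sqrt_div (by positivity), Real.sqrt_sq_eq_abs]
  have hmain : (∫ r in Set.Ioi t, (r - t) ^ (-(3:ℝ)/2) *
        Real.exp (-(r * x ^ 2) / (2 * t * (r - t)) - β * r)) =
      (Real.sqrt (2 * β) / |x|) *
        (∫ r in Set.Ioi t, (r - t) ^ (-(1:ℝ)/2) *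
          Real.exp (-(r * x ^ 2) / (2 * t * (r - t)) - β * r)) := by
    rw [hval, hval, J_eq ha hβ, ← hsq]
    ring
  have hI1pos : 0 < ∫ r in Set.Ioi t, (r - t) ^ (-(1:ℝ)/2) *
      Real.exp (-(r * x ^ 2) / (2 * t * (r - t)) - β * r) := by
    rw [hval]
    exact mul_pos hK (J1_pos ha hβ)
  refine ⟨hint3, hint1, hmain, ?_⟩
  -- final ratio
  set c : ℝ := Real.sqrt β / Real.Gamma (1/2) with hc_def
  have hcpos : 0 < c := by
    rw [hc_def, Real.Gamma_one_half_eq]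
    positivity
  have hnum : Set.EqOn
      (fun r : ℝ => (r - t)⁻¹ * Real.sqrt (r / (r - t)) *
        Real.exp (-(r * x ^ 2) / (2 * t * (r - t))) *
        (c * r ^ (-(1:ℝ)/2) * Real.exp (-(β * r))))
      (fun r : ℝ => c * ((r - t) ^ (-(3:ℝ)/2) *
        Real.exp (-(r * x ^ 2) / (2 * t * (r - t)) - β * r))) (Set.Ioi t) := by
    intro r hr
    have hrt : (0:ℝ) < r - t := sub_pos.mpr hr
    have hr0 : (0:ℝ) < r := lt_trans ht hr
    simp only []
    have e1 : r ^ (-(1:ℝ)/2) = (Real.sqrt r)⁻¹ := by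
      rw [Real.sqrt_eq_rpow, ← Real.rpow_neg hr0.le]; norm_num
    have e2 : (r - t) ^ (-(1:ℝ)/2) = (Real.sqrt (r - t))⁻¹ := by
      rw [Real.sqrt_eq_rpow, ← Real.rpow_neg hrt.le]; norm_num
    have hsr : Real.sqrt r ≠ 0 := (Real.sqrt_pos.mpr hr0).ne'
    have key1 : Real.sqrt (r / (r - t)) * r ^ (-(1:ℝ)/2) = (r - t) ^ (-(1:ℝ)/2) := by
      rw [Real.sqrt_div hr0.le, e1, e2]
      field_simp
    have key2 : (r - t)⁻¹ * (r - t) ^ (-(1:ℝ)/2) = (r - t) ^ (-(3:ℝ)/2) := by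
      rw [← Real.rpow_neg_one (r - t), ← Real.rpow_add hrt]; norm_num
    have key3 : Real.exp (-(r * x ^ 2) / (2 * t * (r - t))) * Real.exp (-(β * r))
        = Real.exp (-(r * x ^ 2) / (2 * t * (r - t)) - β * r) := by
      rw [← Real.exp_add]; exact congrArg Real.exp (by ring)
    calc (r - t)⁻¹ * Real.sqrt (r / (r - t)) *
          Real.exp (-(r * x ^ 2) / (2 * t * (r - t))) *
          (c * r ^ (-(1:ℝ)/2) * Real.exp (-(β * r)))
        = c * ((r - t)⁻¹ * (Real.sqrt (r / (r - t)) * r ^ (-(1:ℝ)/2)) *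
            (Real.exp (-(r * x ^ 2) / (2 * t * (r - t))) * Real.exp (-(β * r)))) := by ring
      _ = c * ((r - t)⁻¹ * (r - t) ^ (-(1:ℝ)/2) *
            Real.exp (-(r * x ^ 2) / (2 * t * (r - t)) - β * r)) := by rw [key1, key3]
      _ = _ := by rw [key2]
  have hden : Set.EqOn
      (fun r : ℝ => Real.sqrt (r / (r - t)) *
        Real.exp (-(r * x ^ 2) / (2 * t * (r - t))) *
        (c * r ^ (-(1:ℝ)/2) * Real.exp (-(β * r))))
      (fun r : ℝ => c * ((r - t) ^ (-(1:ℝ)/2) *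
        Real.exp (-(r * x ^ 2) / (2 * t * (r - t)) - β * r))) (Set.Ioi t) := by
    intro r hr
    have hrt : (0:ℝ) < r - t := sub_pos.mpr hr
    have hr0 : (0:ℝ) < r := lt_trans ht hr
    simp only []
    have e1 : r ^ (-(1:ℝ)/2) = (Real.sqrt r)⁻¹ := by
      rw [Real.sqrt_eq_rpow, ← Real.rpow_neg hr0.le]; norm_num
    have e2 : (r - t) ^ (-(1:ℝ)/2) = (Real.sqrt (r - t))⁻¹ := by
      rw [Real.sqrt_eq_rpow, ← Real.rpow_neg hrt.le]; norm_num
    have hsr : Real.sqrt r ≠ 0 := (Real.sqrt_pos.mpr hr0).ne'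
    have key1 : Real.sqrt (r / (r - t)) * r ^ (-(1:ℝ)/2) = (r - t) ^ (-(1:ℝ)/2) := by
      rw [Real.sqrt_div hr0.le, e1, e2]
      field_simp
    have key3 : Real.exp (-(r * x ^ 2) / (2 * t * (r - t))) * Real.exp (-(β * r))
        = Real.exp (-(r * x ^ 2) / (2 * t * (r - t)) - β * r) := by
      rw [← Real.exp_add]; exact congrArg Real.exp (by ring)
    calc Real.sqrt (r / (r - t)) *
          Real.exp (-(r * x ^ 2) / (2 * t * (r - t))) *
          (c * r ^ (-(1:ℝ)/2) * Real.exp (-(β * r)))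
        = c * ((Real.sqrt (r / (r - t)) * r ^ (-(1:ℝ)/2)) *
            (Real.exp (-(r * x ^ 2) / (2 * t * (r - t))) * Real.exp (-(β * r)))) := by ring
      _ = _ := by rw [key1, key3]
  rw [setIntegral_congr_fun measurableSet_Ioi hnum,
    setIntegral_congr_fun measurableSet_Ioi hden,
    MeasureTheory.integral_const_mul, MeasureTheory.integral_const_mul, hmain,
    mul_div_mul_left _ _ hcpos.ne', mul_div_assoc, div_self hI1pos.ne', mul_one]
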